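/- arXiv:0803.4326 — 4 statements merged into one kernel-verified Lean document; each statement's English description precedes it below -/
import Mathlib

section
/- Let M be a compact metric space with a Borel probability measure μ satisfying μ(B(x,r)) ≥ c·e^{-r^{-k}} (0 < k < 1) for small r, and let u be nonnegative, L-Lipschitz with u(0) = 0. Then for every b > 0, inf over probability densities f of E[f] = ∫ f log f dμ + (b/2)∫∫ u(d(x,y)) f(x) f(y) dμ dμ satisfies inf_f E[f] ≤ b^k + log(1/c) + L, for b ≥ 1 (taking f the normalized indicator of a ball of radius 1/b). -/
open MeasureTheory Real

theorem free_energy_inf_bound {M : Type*} [MetricSpace M] [CompactSpace M]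
    [MeasurableSpace M] [BorelSpace M]
    (μ : Measure M) [IsProbabilityMeasure μ]
    (c k r₀ : ℝ) (hc : 0 < c) (hk : 0 < k) (hk1 : k < 1) (hr₀ : 0 < r₀)
    (hball : ∀ x : M, ∀ r : ℝ, 0 < r → r ≤ r₀ →
      ENNReal.ofReal (c * Real.exp (-r ^ (-k))) ≤ μ (Metric.ball x r))
    (u : ℝ → ℝ) (L : NNReal) (hu0 : ∀ d, 0 ≤ u d) (huL : LipschitzWith L u)
    (huz : u 0 = 0)
    (b : ℝ) (hb : 1 ≤ b) (hbr : 1 / b ≤ r₀) :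
    ∃ f : M → ℝ, (∀ x, 0 ≤ f x) ∧ Integrable f μ ∧ (∫ x, f x ∂μ) = 1 ∧
      (∫ x, f x * Real.log (f x) ∂μ)
        + (b / 2) * ∫ x, ∫ y, u (dist x y) * f x * f y ∂μ ∂μ
      ≤ b ^ k + Real.log (1 / c) + L := by
  have hb0 : (0:ℝ) < b := lt_of_lt_of_le one_pos hb
  have hr : (0:ℝ) < 1 / b := by positivity
  have hne : Nonempty M := by
    by_contra h
    rw [not_nonempty_iff] at h
    have h1 := measure_univ (μ := μ)
    rw [Set.univ_eq_empty_iff.mpr h, measure_empty] at h1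
    exact zero_ne_one h1
  obtain ⟨x₀⟩ := hne
  set B := Metric.ball x₀ (1 / b) with hB
  have hmeasB : MeasurableSet B := Metric.isOpen_ball.measurableSet
  have hlb : ENNReal.ofReal (c * Real.exp (-(1 / b) ^ (-k))) ≤ μ B :=
    hball x₀ (1 / b) hr hbr
  set m := (μ B).toReal with hm
  have hmlb : c * Real.exp (-(1 / b) ^ (-k)) ≤ m := by
    have h2 := ENNReal.toReal_mono (measure_ne_top μ B) hlb
    rwa [ENNReal.toReal_ofReal (by positivity)] at h2
  have hm0 : 0 < m := lt_of_lt_of_le (by positivity) hmlb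
  set f : M → ℝ := B.indicator (fun _ => m⁻¹) with hf
  have hfnn : ∀ x, 0 ≤ f x := fun x =>
    Set.indicator_nonneg (fun _ _ => by positivity) x
  have hfint : Integrable f μ := (integrable_const m⁻¹).indicator hmeasB
  have hfone : (∫ x, f x ∂μ) = 1 := by
    rw [hf, integral_indicator_const _ hmeasB, smul_eq_mul, measureReal_def, ← hm]
    field_simp
  refine ⟨f, hfnn, hfint, hfone, ?_⟩
  -- entropy term
  have hent : (∫ x, f x * Real.log (f x) ∂μ) = -Real.log m := by
    have heq : ∀ x, f x * Real.log (f x)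
        = B.indicator (fun _ => m⁻¹ * Real.log m⁻¹) x := by
      intro x
      by_cases hx : x ∈ B
      · simp [hf, Set.indicator_of_mem hx]
      · simp [hf, Set.indicator_of_notMem hx]
    rw [show (fun x => f x * Real.log (f x)) = B.indicator (fun _ => m⁻¹ * Real.log m⁻¹)
        from funext heq]
    rw [integral_indicator_const _ hmeasB, smul_eq_mul, measureReal_def, ← hm, Real.log_inv]
    field_simp
  -- interaction term
  have hkey : ∀ x, (∫ y, u (dist x y) * f x * f y ∂μ) ≤ (2 * L / b) * f x := by
    intro x
    by_cases hx : x ∈ B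
    · have hfx : f x = m⁻¹ := Set.indicator_of_mem hx _
      have hub : ∀ y, u (dist x y) * f x * f y ≤ (2 * L / b) * m⁻¹ * f y := by
        intro y
        by_cases hy : y ∈ B
        · have hd : dist x y ≤ 2 / b := by
            have := dist_triangle x x₀ y
            have h1 : dist x x₀ < 1 / b := Metric.mem_ball.mp hx
            have h2 : dist x₀ y < 1 / b := by
              rw [dist_comm]; exact Metric.mem_ball.mp hy
            have h22 : 1 / b + 1 / b = 2 / b := by ring
            linarith
          have hud : u (dist x y) ≤ 2 * L / b := by
            have h3 := huL.dist_le_mul (dist x y) 0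
            rw [Real.dist_eq, huz, sub_zero, dist_zero_right,
              Real.norm_eq_abs, abs_dist] at h3
            have h4 : |u (dist x y)| ≤ 2 * L / b := by
              calc |u (dist x y)| ≤ L * dist x y := h3
                _ ≤ L * (2 / b) := by
                    exact mul_le_mul_of_nonneg_left hd L.coe_nonneg
                _ = 2 * L / b := by ring
            exact (abs_le.mp h4).2
          have hfy : 0 ≤ f y := hfnn y
          rw [hfx]
          have : u (dist x y) * m⁻¹ ≤ (2 * L / b) * m⁻¹ :=
            mul_le_mul_of_nonneg_right hud (by positivity)
          exact mul_le_mul_of_nonneg_right this hfy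
        · have hfy : f y = 0 := Set.indicator_of_notMem hy _
          simp [hfy]
      calc (∫ y, u (dist x y) * f x * f y ∂μ)
          ≤ ∫ y, (2 * L / b) * m⁻¹ * f y ∂μ := by
            apply integral_mono_of_nonneg
            · filter_upwards with y
              exact mul_nonneg (mul_nonneg (hu0 _) (hfnn _)) (hfnn _)
            · exact hfint.const_mul _
            · filter_upwards with y using hub y
        _ = (2 * L / b) * f x := by
            rw [integral_const_mul, hfone, hfx]; ring
    · have hfx : f x = 0 := Set.indicator_of_notMem hx _
      simp [hfx]
  have hdouble : (∫ x, ∫ y, u (dist x y) * f x * f y ∂μ ∂μ) ≤ 2 * L / b := by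
    calc (∫ x, ∫ y, u (dist x y) * f x * f y ∂μ ∂μ)
        ≤ ∫ x, (2 * L / b) * f x ∂μ := by
          apply integral_mono_of_nonneg
          · filter_upwards with x
            exact integral_nonneg fun y =>
              mul_nonneg (mul_nonneg (hu0 _) (hfnn _)) (hfnn _)
          · exact hfint.const_mul _
          · filter_upwards with x using hkey x
      _ = 2 * L / b := by rw [integral_const_mul, hfone, mul_one]
  have hrk : (1 / b) ^ (-k) = b ^ k := by
    rw [one_div, ← Real.rpow_neg_one b, ← Real.rpow_mul hb0.le]
    norm_num
  have hlog : -Real.log m ≤ b ^ k + Real.log (1 / c) := by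
    have h5 : Real.log (c * Real.exp (-(1 / b) ^ (-k))) ≤ Real.log m :=
      Real.log_le_log (by positivity) hmlb
    rw [Real.log_mul hc.ne' (Real.exp_ne_zero _), Real.log_exp, hrk] at h5
    rw [Real.log_div one_ne_zero hc.ne', Real.log_one]
    linarith
  have hfinal : (b / 2) * (∫ x, ∫ y, u (dist x y) * f x * f y ∂μ ∂μ) ≤ L := by
    calc (b / 2) * (∫ x, ∫ y, u (dist x y) * f x * f y ∂μ ∂μ)
        ≤ (b / 2) * (2 * L / b) := by
          apply mul_le_mul_of_nonneg_left hdouble (by positivity)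
      _ = L := by field_simp
  linarith [hent, hfinal, hlog]
end

section
/- For z ∈ [0,1), lim_{τ→0⁺} τ^{-1/2} ∫₀^{2π} e^{-(sin θ - z)²/τ} dθ = 2√π / √(1-z²). -/
open Real Filter intervalIntegral MeasureTheory Set

private lemma sin_image_Ioo' : Real.sin '' Set.Ioo (-(π/2)) (π/2) = Set.Ioo (-1:ℝ) 1 := by
  ext u
  constructor
  · rintro ⟨x, hx, rfl⟩
    have h1 : Real.sin x < 1 := by
      have := Real.strictMonoOn_sin (Set.mem_Icc.2 ⟨hx.1.le, hx.2.le⟩)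
        (Set.mem_Icc.2 ⟨by linarith [Real.pi_pos], le_refl _⟩) hx.2
      simpa using this
    have h2 : -1 < Real.sin x := by
      have := Real.strictMonoOn_sin (Set.mem_Icc.2 ⟨le_refl _, by linarith [Real.pi_pos]⟩)
        (Set.mem_Icc.2 ⟨hx.1.le, hx.2.le⟩) hx.1
      simpa using this
    exact ⟨h2, h1⟩
  · intro hu
    exact ⟨Real.arcsin u, ⟨Real.neg_pi_div_two_lt_arcsin.2 hu.1,
      Real.arcsin_lt_pi_div_two.2 hu.2⟩, Real.sin_arcsin hu.1.le hu.2.le⟩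

private lemma subst_eq' (F : ℝ → ℝ) :
    ∫ u in Set.Ioo (-1:ℝ) 1, F u * (Real.sqrt (1 - u^2))⁻¹ =
    ∫ x in Set.Ioo (-(π/2)) (π/2), F (Real.sin x) := by
  have hd : ∀ x ∈ Set.Ioo (-(π/2)) (π/2), HasDerivWithinAt Real.sin (Real.cos x)
      (Set.Ioo (-(π/2)) (π/2)) x := fun x _ => (Real.hasDerivAt_sin x).hasDerivWithinAt
  have hinj : Set.InjOn Real.sin (Set.Ioo (-(π/2)) (π/2)) :=
    Real.injOn_sin.mono Set.Ioo_subset_Icc_self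
  have := integral_image_eq_integral_abs_deriv_smul measurableSet_Ioo hd hinj
    (fun u => F u * (Real.sqrt (1 - u^2))⁻¹)
  rw [sin_image_Ioo'] at this
  rw [this]
  apply setIntegral_congr_fun measurableSet_Ioo
  intro x hx
  have hc : 0 < Real.cos x := Real.cos_pos_of_mem_Ioo hx
  have h1 : (1 : ℝ) - Real.sin x ^ 2 = Real.cos x ^ 2 := by
    have := Real.sin_sq_add_cos_sq x; linarith
  simp only [smul_eq_mul, h1, Real.sqrt_sq hc.le, abs_of_pos hc]
  field_simp

private lemma integrableOn_invsqrt :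
    IntegrableOn (fun u => (Real.sqrt (1 - u^2))⁻¹) (Set.Ioo (-1:ℝ) 1) := by
  have hd : ∀ x ∈ Set.Ioo (-(π/2)) (π/2), HasDerivWithinAt Real.sin (Real.cos x)
      (Set.Ioo (-(π/2)) (π/2)) x := fun x _ => (Real.hasDerivAt_sin x).hasDerivWithinAt
  have hinj : Set.InjOn Real.sin (Set.Ioo (-(π/2)) (π/2)) :=
    Real.injOn_sin.mono Set.Ioo_subset_Icc_self
  rw [← sin_image_Ioo',
    integrableOn_image_iff_integrableOn_abs_deriv_smul measurableSet_Ioo hd hinj]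
  refine IntegrableOn.congr_fun (f := fun _ => (1:ℝ))
    (integrableOn_const measure_Ioo_lt_top.ne) (fun x hx => ?_) measurableSet_Ioo
  have hc : 0 < Real.cos x := Real.cos_pos_of_mem_Ioo hx
  have h1 : (1 : ℝ) - Real.sin x ^ 2 = Real.cos x ^ 2 := by
    have := Real.sin_sq_add_cos_sq x; linarith
  simp only [smul_eq_mul, h1, Real.sqrt_sq hc.le, abs_of_pos hc]
  field_simp

private lemma gauss_total (τ : ℝ) (c : ℝ) :
    ∫ u : ℝ, Real.exp (-(u - c)^2 / τ) = Real.sqrt (π * τ) := by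
  have h : ∀ u : ℝ, Real.exp (-(u - c)^2 / τ) = (fun v => Real.exp (-τ⁻¹ * v^2)) (u - c) := by
    intro u; simp only [neg_mul, neg_div]; rw [div_eq_inv_mul]
  simp_rw [h]
  rw [integral_sub_right_eq_self (fun v => Real.exp (-τ⁻¹ * v^2)) c, integral_gaussian]
  congr 1; field_simp

private lemma gauss_int (τ : ℝ) (hτ : 0 < τ) (c : ℝ) :
    Integrable (fun u : ℝ => Real.exp (-(u - c)^2 / τ)) := by
  have h : ∀ u : ℝ, Real.exp (-(u - c)^2 / τ) = (fun v => Real.exp (-τ⁻¹ * v^2)) (u - c) := by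
    intro u; simp only [neg_mul, neg_div]; rw [div_eq_inv_mul]
  simp_rw [h]
  exact (integrable_exp_neg_mul_sq (by positivity)).comp_sub_right c

private lemma exp_neg_div_tendsto (c : ℝ) (hc : 0 < c) :
    Tendsto (fun τ : ℝ => Real.exp (-c / τ)) (nhdsWithin 0 (Set.Ioi 0)) (nhds 0) := by
  apply Real.tendsto_exp_atBot.comp
  have h1 : Tendsto (fun τ : ℝ => c * τ⁻¹) (nhdsWithin 0 (Set.Ioi 0)) atTop :=
    (tendsto_inv_nhdsGT_zero).const_mul_atTop hc
  refine (tendsto_neg_atTop_atBot.comp h1).congr fun τ => ?_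
  simp only [Function.comp]
  rw [neg_div, div_eq_mul_inv, mul_comm]

-- the scalar peak bound limit: (√(πτ))⁻¹ e^{-c/τ} → 0 for c > 0
private lemma peak_bound_tendsto (c : ℝ) (hc : 0 < c) :
    Tendsto (fun τ : ℝ => (Real.sqrt (π * τ))⁻¹ * Real.exp (-c / τ))
      (nhdsWithin 0 (Set.Ioi 0)) (nhds 0) := by
  have h0 : Tendsto (fun x : ℝ => x ^ (1/2 : ℝ) * Real.exp (-c * x)) atTop (nhds 0) :=
    tendsto_rpow_mul_exp_neg_mul_atTop_nhds_zero _ c hc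
  have h1 := (h0.comp tendsto_inv_nhdsGT_zero).const_mul ((Real.sqrt π)⁻¹)
  rw [mul_zero] at h1
  refine h1.congr' ?_
  filter_upwards [self_mem_nhdsWithin] with τ (hτ : 0 < τ)
  simp only [Function.comp]
  rw [← Real.sqrt_eq_rpow, Real.sqrt_inv, Real.sqrt_mul Real.pi_pos.le, mul_inv, ← mul_assoc,
    div_eq_mul_inv (-c) τ]

theorem lambda_initial_limit (z : ℝ) (hz : z ∈ Set.Ico (0:ℝ) 1) :
    Tendsto
      (fun τ : ℝ =>
        Real.sqrt τ⁻¹ * ∫ θ in (0:ℝ)..(2 * π), Real.exp (-(Real.sin θ - z) ^ 2 / τ))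
      (nhdsWithin 0 (Set.Ioi 0))
      (nhds (2 * Real.sqrt π / Real.sqrt (1 - z ^ 2))) := by
  obtain ⟨hz0, hz1⟩ := hz
  have hz2 : z ^ 2 < 1 := by nlinarith
  set l := nhdsWithin (0:ℝ) (Set.Ioi 0) with hl
  set g : ℝ → ℝ := fun u => (Real.sqrt (1 - u^2))⁻¹ with hg
  set φ : ℝ → ℝ → ℝ := fun τ u => (Real.sqrt (π * τ))⁻¹ * Real.exp (-(u - z)^2 / τ) with hφ
  -- tails
  have tail_right : ∀ τ : ℝ, 0 < τ →
      ∫ u in Set.Ici (1:ℝ), φ τ u ≤ Real.exp (-(1 - z)^2 / τ) := by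
    intro τ hτ
    have hs : 0 < Real.sqrt (π * τ) := Real.sqrt_pos.2 (by positivity)
    have key : ∀ u ∈ Set.Ici (1:ℝ),
        φ τ u ≤ Real.exp (-(1 - z)^2 / τ) * ((Real.sqrt (π * τ))⁻¹ * Real.exp (-(u - 1)^2 / τ)) := by
      intro u hu
      rw [hφ]
      rw [mul_comm (Real.exp _), mul_assoc, ← Real.exp_add]
      apply mul_le_mul_of_nonneg_left _ (by positivity)
      apply Real.exp_le_exp.2
      rw [← add_div, div_le_div_iff_of_pos_right hτ]
      nlinarith [Set.mem_Ici.1 hu]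
    calc ∫ u in Set.Ici (1:ℝ), φ τ u
        ≤ ∫ u in Set.Ici (1:ℝ),
            Real.exp (-(1 - z)^2 / τ) * ((Real.sqrt (π * τ))⁻¹ * Real.exp (-(u - 1)^2 / τ)) := by
          apply setIntegral_mono_on
          · exact ((gauss_int τ hτ z).const_mul _).integrableOn
          · exact (((gauss_int τ hτ 1).const_mul _).const_mul _).integrableOn
          · exact measurableSet_Ici
          · exact key
      _ ≤ Real.exp (-(1 - z)^2 / τ) * ((Real.sqrt (π * τ))⁻¹ * Real.sqrt (π * τ)) := by
          rw [MeasureTheory.integral_const_mul]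
          apply mul_le_mul_of_nonneg_left _ (by positivity)
          rw [MeasureTheory.integral_const_mul]
          apply mul_le_mul_of_nonneg_left _ (by positivity)
          rw [← gauss_total τ 1]
          exact setIntegral_le_integral (gauss_int τ hτ 1)
            (by filter_upwards with x using (by positivity))
      _ = Real.exp (-(1 - z)^2 / τ) := by rw [inv_mul_cancel₀ hs.ne', mul_one]
  have tail_left : ∀ τ : ℝ, 0 < τ →
      ∫ u in Set.Iic (-1:ℝ), φ τ u ≤ Real.exp (-(1 + z)^2 / τ) := by
    intro τ hτ
    have hs : 0 < Real.sqrt (π * τ) := Real.sqrt_pos.2 (by positivity)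
    have key : ∀ u ∈ Set.Iic (-1:ℝ),
        φ τ u ≤ Real.exp (-(1 + z)^2 / τ) * ((Real.sqrt (π * τ))⁻¹ * Real.exp (-(u + 1)^2 / τ)) := by
      intro u hu
      rw [hφ]
      rw [mul_comm (Real.exp _), mul_assoc, ← Real.exp_add]
      apply mul_le_mul_of_nonneg_left _ (by positivity)
      apply Real.exp_le_exp.2
      rw [← add_div, div_le_div_iff_of_pos_right hτ]
      nlinarith [Set.mem_Iic.1 hu]
    calc ∫ u in Set.Iic (-1:ℝ), φ τ u
        ≤ ∫ u in Set.Iic (-1:ℝ),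
            Real.exp (-(1 + z)^2 / τ) * ((Real.sqrt (π * τ))⁻¹ * Real.exp (-(u + 1)^2 / τ)) := by
          apply setIntegral_mono_on
          · exact ((gauss_int τ hτ z).const_mul _).integrableOn
          · have : Integrable (fun u : ℝ => Real.exp (-(u - (-1))^2 / τ)) := gauss_int τ hτ (-1)
            simp only [sub_neg_eq_add] at this
            exact ((this.const_mul _).const_mul _).integrableOn
          · exact measurableSet_Iic
          · exact key
      _ ≤ Real.exp (-(1 + z)^2 / τ) * ((Real.sqrt (π * τ))⁻¹ * Real.sqrt (π * τ)) := by
          rw [MeasureTheory.integral_const_mul]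
          apply mul_le_mul_of_nonneg_left _ (by positivity)
          rw [MeasureTheory.integral_const_mul]
          apply mul_le_mul_of_nonneg_left _ (by positivity)
          have h2 := gauss_total τ (-1)
          simp only [sub_neg_eq_add] at h2
          rw [← h2]
          have h3 : Integrable (fun u : ℝ => Real.exp (-(u - (-1))^2 / τ)) := gauss_int τ hτ (-1)
          simp only [sub_neg_eq_add] at h3
          exact setIntegral_le_integral h3
            (by filter_upwards with x using (by positivity))
      _ = Real.exp (-(1 + z)^2 / τ) := by rw [inv_mul_cancel₀ hs.ne', mul_one]
  -- integral of φ over Ioo tends to 1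
  have hiφ : Tendsto (fun τ => ∫ u in Set.Ioo (-1:ℝ) 1, φ τ u) l (nhds 1) := by
    have hTplus : Tendsto (fun τ => ∫ u in Set.Ici (1:ℝ), φ τ u) l (nhds 0) := by
      apply squeeze_zero'
      · filter_upwards [self_mem_nhdsWithin] with τ (hτ : 0 < τ)
        exact setIntegral_nonneg measurableSet_Ici fun u _ => by positivity
      · filter_upwards [self_mem_nhdsWithin] with τ (hτ : 0 < τ) using tail_right τ hτ
      · exact exp_neg_div_tendsto _ (by nlinarith)
    have hTminus : Tendsto (fun τ => ∫ u in Set.Iic (-1:ℝ), φ τ u) l (nhds 0) := by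
      apply squeeze_zero'
      · filter_upwards [self_mem_nhdsWithin] with τ (hτ : 0 < τ)
        exact setIntegral_nonneg measurableSet_Iic fun u _ => by positivity
      · filter_upwards [self_mem_nhdsWithin] with τ (hτ : 0 < τ) using tail_left τ hτ
      · exact exp_neg_div_tendsto _ (by nlinarith)
    have main : Tendsto (fun τ : ℝ => 1 - (∫ u in Set.Iic (-1:ℝ), φ τ u)
        - ∫ u in Set.Ici (1:ℝ), φ τ u) l (nhds 1) := by
      have := (tendsto_const_nhds (x := (1:ℝ)) (f := l)).sub hTminus |>.sub hTplus
      simpa using this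
    refine main.congr' ?_
    filter_upwards [self_mem_nhdsWithin] with τ (hτ : 0 < τ)
    have hint : Integrable (φ τ) := (gauss_int τ hτ z).const_mul _
    have htot : ∫ u, φ τ u = 1 := by
      rw [hφ]
      simp only
      rw [MeasureTheory.integral_const_mul, gauss_total τ z,
        inv_mul_cancel₀ (Real.sqrt_pos.2 (by positivity)).ne']
    have hdecomp : ∫ u, φ τ u = (∫ u in Set.Iic (-1:ℝ), φ τ u)
        + (∫ u in Set.Ioo (-1:ℝ) 1, φ τ u) + ∫ u in Set.Ici (1:ℝ), φ τ u := by
      have h1 : Set.Iic (-1:ℝ) ∪ Set.Ioo (-1:ℝ) 1 = Set.Iio 1 :=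
        Set.Iic_union_Ioo_eq_Iio (by norm_num)
      have d1 : Disjoint (Set.Iic (-1:ℝ)) (Set.Ioo (-1:ℝ) 1) := by
        rw [Set.disjoint_left]; rintro x hx ⟨h, -⟩; exact absurd hx (not_le.2 h)
      have d2 : Disjoint (Set.Iio (1:ℝ)) (Set.Ici 1) := Set.Iio_disjoint_Ici le_rfl
      rw [← setIntegral_union d1 measurableSet_Ioo hint.integrableOn hint.integrableOn, h1,
        ← setIntegral_union d2 measurableSet_Ici hint.integrableOn hint.integrableOn,
        Set.Iio_union_Ici, setIntegral_univ]
    rw [hdecomp] at htot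
    linarith
  -- uniform convergence away from z
  have hlφ : ∀ u : Set ℝ, IsOpen u → z ∈ u →
      TendstoUniformlyOn φ 0 l (Set.Ioo (-1:ℝ) 1 \ u) := by
    intro u hu hzu
    obtain ⟨δ, hδ, hball⟩ := Metric.isOpen_iff.1 hu z hzu
    rw [Metric.tendstoUniformlyOn_iff]
    intro ε hε
    have hM := peak_bound_tendsto (δ^2) (by positivity)
    filter_upwards [hM.eventually (gt_mem_nhds hε), self_mem_nhdsWithin] with τ hMτ (hτ : 0 < τ)
    intro x hx
    have hxz : δ ≤ |x - z| := by
      by_contra h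
      push_neg at h
      exact hx.2 (hball (by rw [Metric.mem_ball, Real.dist_eq]; exact h))
    have hsq : δ^2 ≤ (x - z)^2 := by
      rw [← sq_abs (x - z)]
      exact pow_le_pow_left₀ hδ.le hxz 2
    have hφle : φ τ x ≤ (Real.sqrt (π * τ))⁻¹ * Real.exp (-δ^2 / τ) := by
      apply mul_le_mul_of_nonneg_left _ (by positivity)
      apply Real.exp_le_exp.2
      rw [div_le_div_iff_of_pos_right hτ]
      linarith
    have : dist (0:ℝ) (φ τ x) = φ τ x := by
      rw [dist_zero_left, Real.norm_eq_abs, abs_of_nonneg (by rw [hφ]; positivity)]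
    rw [Pi.zero_apply, this]
    calc φ τ x ≤ (Real.sqrt (π * τ))⁻¹ * Real.exp (-δ^2 / τ) := hφle
      _ < ε := hMτ
  -- the peak limit
  have hpeak : Tendsto (fun τ => ∫ x in Set.Ioo (-1:ℝ) 1, φ τ x • g x) l
      (nhds ((Real.sqrt (1 - z^2))⁻¹)) := by
    apply tendsto_setIntegral_peak_smul_of_integrableOn_of_tendsto
      (hs := measurableSet_Ioo) (ht := measurableSet_Ioo) (hts := subset_rfl)
      (h'ts := self_mem_nhdsWithin) (h't := measure_Ioo_lt_top.ne)
    · filter_upwards [self_mem_nhdsWithin] with τ (hτ : 0 < τ)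
      intro x _
      rw [hφ]; positivity
    · exact hlφ
    · exact hiφ
    · filter_upwards with τ
      exact (Continuous.aestronglyMeasurable (by fun_prop)).restrict
    · exact integrableOn_invsqrt
    · apply ContinuousWithinAt.tendsto
      apply ContinuousAt.continuousWithinAt
      have h1 : (0:ℝ) < 1 - z^2 := by linarith
      apply ContinuousAt.inv₀
      · exact (Real.continuous_sqrt.comp (by continuity)).continuousAt
      · exact (Real.sqrt_pos.2 h1).ne'
  have final := hpeak.const_mul (2 * Real.sqrt π)
  have hval : 2 * Real.sqrt π * (Real.sqrt (1 - z^2))⁻¹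
      = 2 * Real.sqrt π / Real.sqrt (1 - z ^ 2) := by
    rw [div_eq_mul_inv]
  rw [hval] at final
  refine final.congr' ?_
  filter_upwards [self_mem_nhdsWithin] with τ (hτ : 0 < τ)
  set f : ℝ → ℝ := fun θ => Real.exp (-(Real.sin θ - z) ^ 2 / τ) with hf
  have hfc : Continuous f := by fun_prop
  have h_per : Function.Periodic f (2 * π) := fun x => by
    simp only [hf, Real.sin_add_two_pi]
  have eq1 : ∫ θ in (0:ℝ)..(2 * π), f θ = ∫ θ in (-(π/2))..(-(π/2) + 2*π), f θ := by
    have := h_per.intervalIntegral_add_eq 0 (-(π/2))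
    simpa using this
  have eq2 : ∫ θ in (-(π/2))..(-(π/2) + 2*π), f θ
      = (∫ θ in (-(π/2))..(π/2), f θ) + ∫ θ in (π/2)..(-(π/2) + 2*π), f θ :=
    (integral_add_adjacent_intervals (hfc.intervalIntegrable _ _)
      (hfc.intervalIntegrable _ _)).symm
  have eq3 : ∫ θ in (π/2)..(-(π/2) + 2*π), f θ = ∫ θ in (-(π/2))..(π/2), f θ := by
    have h := intervalIntegral.integral_comp_sub_left (a := -(π/2)) (b := π/2) f π
    have e1 : π - π/2 = π/2 := by ring
    have e2 : π - -(π/2) = -(π/2) + 2*π := by ring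
    rw [e1, e2] at h
    rw [← h]
    apply intervalIntegral.integral_congr
    intro x _
    simp only [hf, Real.sin_pi_sub]
  have eq4 : ∫ θ in (-(π/2))..(π/2), f θ = ∫ θ in Set.Ioo (-(π/2)) (π/2), f θ := by
    rw [intervalIntegral.integral_of_le (by linarith [Real.pi_pos]),
      MeasureTheory.integral_Ioc_eq_integral_Ioo]
  have eq5 : ∫ θ in Set.Ioo (-(π/2)) (π/2), f θ
      = ∫ u in Set.Ioo (-1:ℝ) 1, Real.exp (-(u - z) ^ 2 / τ) * g u :=
    (subst_eq' (fun u => Real.exp (-(u - z) ^ 2 / τ))).symm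
  have eqc : ∫ x in Set.Ioo (-1:ℝ) 1, φ τ x • g x
      = (Real.sqrt (π * τ))⁻¹ * ∫ u in Set.Ioo (-1:ℝ) 1, Real.exp (-(u - z) ^ 2 / τ) * g u := by
    rw [← MeasureTheory.integral_const_mul]
    apply setIntegral_congr_fun measurableSet_Ioo
    intro x _
    simp only [hφ, smul_eq_mul]
    ring
  rw [eqc, eq1, eq2, eq3, eq4, eq5]
  have hsπ : (0:ℝ) < Real.sqrt π := Real.sqrt_pos.2 Real.pi_pos
  have hsτ : (0:ℝ) < Real.sqrt τ := Real.sqrt_pos.2 hτ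
  rw [Real.sqrt_mul Real.pi_pos.le, Real.sqrt_inv, mul_inv]
  field_simp
  ring
end

section
/- Let M₁,...,M_N be measure spaces with probability measures μ_j, with bounded symmetric kernels u_j on M_j × M_j, and kernel v(p,q) = Σ_j u_j(p_j,q_j) on the product space M = ∏ M_j with product measure μ. If f_j solves the Onsager equation f_j = Z_j^{-1} e^{-b U_j[f_j]} on M_j for each j, then the product f(p) = ∏_j f_j(p_j) solves the Onsager equation f = Z^{-1} e^{-b U[f]} on M with kernel v, where Z = ∏_j Z_j. -/
open MeasureTheory

theorem product_onsager_solution {N : ℕ} {M : Fin N → Type*}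
    [∀ j, MeasurableSpace (M j)]
    (μ : ∀ j, Measure (M j)) [∀ j, IsProbabilityMeasure (μ j)]
    (u : ∀ j, M j → M j → ℝ)
    (hu_meas : ∀ j, Measurable (Function.uncurry (u j)))
    (hu_symm : ∀ j p q, u j p q = u j q p)
    (C : ℝ) (hu_bd : ∀ j p q, |u j p q| ≤ C)
    (b : ℝ)
    (f : ∀ j, M j → ℝ) (hf_meas : ∀ j, Measurable (f j))
    (hf_int : ∀ j, Integrable (f j) (μ j))
    (hf_norm : ∀ j, (∫ q, f j q ∂(μ j)) = 1)
    (Z : Fin N → ℝ)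
    (hZ : ∀ j, Z j = ∫ p, Real.exp (-b * ∫ q, u j p q * f j q ∂(μ j)) ∂(μ j))
    (honsager : ∀ j, ∀ p, f j p = (Z j)⁻¹ *
        Real.exp (-b * ∫ q, u j p q * f j q ∂(μ j))) :
    ∀ p : ∀ j, M j,
      (∏ j, f j (p j)) = (∏ j, Z j)⁻¹ *
        Real.exp (-b * ∫ q, (∑ j, u j (p j) (q j)) * ∏ j, f j (q j)
            ∂(Measure.pi μ)) := by
  intro p
  letI : ∀ j, MeasureSpace (M j) := fun j => ⟨μ j⟩
  haveI : ∀ j, SigmaFinite (volume : Measure (M j)) := fun j => by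
    change SigmaFinite (μ j); infer_instance
  have hpi : Measure.pi μ = (volume : Measure (∀ j, M j)) := by
    rw [volume_pi]; rfl
  set I : ∀ j, M j → ℝ := fun j x => ∫ q, u j x q * f j q ∂(μ j) with hI
  -- g j : the functions to take the product of, with u inserted at slot j
  have key : ∀ j : Fin N,
      (∫ q : ∀ k, M k, u j (p j) (q j) * ∏ k, f k (q k) ∂(Measure.pi μ))
        = I j (p j) := by
    intro j
    set g : ∀ k, M k → ℝ :=
      Function.update f j (fun x => u j (p j) x * f j x) with hg
    have hprod : ∀ q : ∀ k, M k,
        u j (p j) (q j) * ∏ k, f k (q k) = ∏ k, g k (q k) := by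
      intro q
      rw [← Finset.mul_prod_erase Finset.univ (fun k => f k (q k)) (Finset.mem_univ j),
          ← Finset.mul_prod_erase Finset.univ (fun k => g k (q k)) (Finset.mem_univ j),
          ← mul_assoc]
      congr 1
      · simp [hg]
      · apply Finset.prod_congr rfl
        intro k hk
        have : k ≠ j := (Finset.mem_erase.mp hk).1
        simp [hg, Function.update_of_ne this]
    have hgint : ∀ k, Integrable (g k) (μ k) := by
      intro k
      rcases eq_or_ne k j with rfl | hkj
      · simp only [hg, Function.update_self]
        refine (hf_int k).bdd_mul (c := C) ?_ (ae_of_all _ fun x => ?_)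
        · exact (((hu_meas k).comp measurable_prodMk_left : Measurable fun x => u k (p k) x)).aestronglyMeasurable
        · simpa [Real.norm_eq_abs] using hu_bd k (p k) x
      · simp [hg, Function.update_of_ne hkj, hf_int k]
    simp_rw [hprod, hpi]
    rw [volume_pi, MeasureTheory.integral_fintype_prod_eq_prod g]
    rw [← Finset.mul_prod_erase Finset.univ (fun k => ∫ x, g k x) (Finset.mem_univ j)]
    have : ∀ k ∈ Finset.univ.erase j, (∫ x, g k x) = (1 : ℝ) := by
      intro k hk
      have hkj : k ≠ j := (Finset.mem_erase.mp hk).1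
      simp only [hg, Function.update_of_ne hkj]
      exact hf_norm k
    rw [Finset.prod_congr rfl this, Finset.prod_const_one, mul_one]
    simp [hg, hI]
    rfl
  have hint : ∀ j : Fin N,
      Integrable (fun q : ∀ k, M k => u j (p j) (q j) * ∏ k, f k (q k))
        (Measure.pi μ) := by
    intro j
    set g : ∀ k, M k → ℝ :=
      Function.update f j (fun x => u j (p j) x * f j x) with hg
    have hprod : ∀ q : ∀ k, M k,
        u j (p j) (q j) * ∏ k, f k (q k) = ∏ k, g k (q k) := by
      intro q
      rw [← Finset.mul_prod_erase Finset.univ (fun k => f k (q k)) (Finset.mem_univ j),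
          ← Finset.mul_prod_erase Finset.univ (fun k => g k (q k)) (Finset.mem_univ j),
          ← mul_assoc]
      congr 1
      · simp [hg]
      · apply Finset.prod_congr rfl
        intro k hk
        have : k ≠ j := (Finset.mem_erase.mp hk).1
        simp [hg, Function.update_of_ne this]
    have hgint : ∀ k, Integrable (g k) (volume : Measure (M k)) := by
      intro k
      rcases eq_or_ne k j with rfl | hkj
      · simp only [hg, Function.update_self]
        refine (hf_int k).bdd_mul (c := C) ?_ (ae_of_all _ fun x => ?_)
        · exact (((hu_meas k).comp measurable_prodMk_left : Measurable fun x => u k (p k) x)).aestronglyMeasurable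
        · simpa [Real.norm_eq_abs] using hu_bd k (p k) x
      · simp only [hg, Function.update_of_ne hkj]
        exact hf_int k
    simp_rw [hprod, hpi]
    exact Integrable.fintype_prod_dep hgint
  have hsum : (∫ q : ∀ k, M k, (∑ j, u j (p j) (q j)) * ∏ k, f k (q k)
      ∂(Measure.pi μ)) = ∑ j, I j (p j) := by
    simp_rw [Finset.sum_mul]
    rw [integral_finset_sum _ (fun j _ => hint j)]
    exact Finset.sum_congr rfl fun j _ => key j
  rw [hsum]
  calc (∏ j, f j (p j))
      = ∏ j, ((Z j)⁻¹ * Real.exp (-b * I j (p j))) := by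
        exact Finset.prod_congr rfl fun j _ => honsager j (p j)
    _ = (∏ j, Z j)⁻¹ * Real.exp (-b * ∑ j, I j (p j)) := by
        rw [Finset.prod_mul_distrib, ← Finset.prod_inv_distrib, ← Real.exp_sum]
        congr 1
        rw [Finset.mul_sum]
end

section
/- Let M be a compact metric space, μ a Borel probability on M, u : [0,∞) → ℝ nonnegative, bounded, Lipschitz. Let g_n be solutions of the Onsager equation g_n = Z_n^{-1} e^{-b_n U_n} with U_n(x) = ∫ u(d(x,y)) g_n(y) dμ(y) and b_n → ∞, such that U_n → U_∞ uniformly and μ satisfies μ(B(x,r)) ≥ c·e^{-r^{-k}} with 0 < k < 1. Then for any continuous φ supported in {x : U_∞(x) > min U_∞}, lim_n ∫ φ g_n dμ = 0. -/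
open MeasureTheory Real Filter

theorem onsager_concentration {M : Type*} [MetricSpace M] [CompactSpace M]
    [MeasurableSpace M] [BorelSpace M]
    (μ : Measure M) [IsProbabilityMeasure μ]
    (c k r₀ : ℝ) (hc : 0 < c) (hk : 0 < k) (hk1 : k < 1) (hr₀ : 0 < r₀)
    (hball : ∀ x : M, ∀ r : ℝ, 0 < r → r ≤ r₀ →
      ENNReal.ofReal (c * Real.exp (-r ^ (-k))) ≤ μ (Metric.ball x r))
    (u : ℝ → ℝ) (C : ℝ) (L : NNReal)
    (hu0 : ∀ d, 0 ≤ u d) (huC : ∀ d, u d ≤ C) (huL : LipschitzWith L u)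
    (b : ℕ → ℝ) (hbpos : ∀ n, 0 < b n) (hb : Tendsto b atTop atTop)
    (g : ℕ → M → ℝ) (hg_meas : ∀ n, Measurable (g n))
    (hg_nonneg : ∀ n x, 0 ≤ g n x)
    (hg_int : ∀ n, Integrable (g n) μ)
    (hg_norm : ∀ n, (∫ x, g n x ∂μ) = 1)
    (U : ℕ → M → ℝ)
    (hU : ∀ n x, U n x = ∫ y, u (dist x y) * g n y ∂μ)
    (honsager : ∀ n x, g n x =
      (∫ y, Real.exp (-(b n) * U n y) ∂μ)⁻¹ * Real.exp (-(b n) * U n x))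
    (Uinf : M → ℝ)
    (hUconv : TendstoUniformly U Uinf atTop) :
    ∀ φ : M → ℝ, Continuous φ →
      (∀ x ∈ tsupport φ, sInf (Set.range Uinf) < Uinf x) →
      Tendsto (fun n => ∫ x, φ x * g n x ∂μ) atTop (nhds 0) := by
  classical
  intro φ hφ hsupp
  -- nonempty
  have hM : Nonempty M := by
    rcases isEmpty_or_nonempty M with h | h
    · exfalso
      have h1 : μ Set.univ = 1 := measure_univ
      rw [Set.univ_eq_empty_iff.mpr h, measure_empty] at h1
      exact zero_ne_one h1
    · exact h
  -- integrability of the kernel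
  have hint : ∀ n (x : M), Integrable (fun y => u (dist x y) * g n y) μ := by
    intro n x
    refine (hg_int n).bdd_mul (c := C) ?_ (ae_of_all _ fun y => ?_)
    · exact (huL.continuous.comp (continuous_const.dist continuous_id)).aestronglyMeasurable
    · rw [Real.norm_eq_abs, abs_of_nonneg (hu0 _)]; exact huC _
  -- Lipschitz bound for U n
  have hUlip : ∀ n (x x' : M), |U n x - U n x'| ≤ L * dist x x' := by
    intro n x x'
    have h1 : U n x - U n x' = ∫ y, (u (dist x y) - u (dist x' y)) * g n y ∂μ := by
      rw [hU, hU, ← integral_sub (hint n x) (hint n x')]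
      congr 1; funext y; ring
    rw [h1]
    calc |∫ y, (u (dist x y) - u (dist x' y)) * g n y ∂μ|
        ≤ ∫ y, |u (dist x y) - u (dist x' y)| * |g n y| ∂μ := by
          simpa [Real.norm_eq_abs, abs_mul] using
            norm_integral_le_integral_norm (μ := μ)
              (fun y => (u (dist x y) - u (dist x' y)) * g n y)
      _ ≤ ∫ y, (L * dist x x') * g n y ∂μ := by
          refine integral_mono (by simpa [← abs_mul, sub_mul] using ((hint n x).sub (hint n x')).abs)
            ((hg_int n).const_mul _) (fun y => ?_)
          rw [abs_of_nonneg (hg_nonneg n y)]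
          refine mul_le_mul_of_nonneg_right ?_ (hg_nonneg n y)
          calc |u (dist x y) - u (dist x' y)| ≤ L * |dist x y - dist x' y| := by
                have := huL.dist_le_mul (dist x y) (dist x' y)
                rwa [Real.dist_eq, Real.dist_eq] at this
            _ ≤ L * dist x x' := by
                exact mul_le_mul_of_nonneg_left (abs_dist_sub_le x x' y) L.2
      _ = L * dist x x' := by rw [integral_const_mul, hg_norm n, mul_one]
  have hUcont : ∀ n, Continuous (U n) := by
    intro n
    refine (LipschitzWith.of_dist_le_mul (K := L) fun x x' => ?_).continuous
    rw [Real.dist_eq]; exact hUlip n x x'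
  have hUinfcont : Continuous Uinf :=
    hUconv.continuous (Eventually.of_forall hUcont).frequently
  -- trivial case: empty support
  by_cases hne : (tsupport φ).Nonempty
  swap
  · have hzero : ∀ x, φ x = 0 := fun x =>
      image_eq_zero_of_notMem_tsupport (fun hx => hne ⟨x, hx⟩)
    have : (fun n => ∫ x, φ x * g n x ∂μ) = fun _ => 0 := by
      funext n; simp [hzero]
    rw [this]; exact tendsto_const_nhds
  -- global minimum of Uinf
  set m := sInf (Set.range Uinf) with hm
  obtain ⟨z, -, hz⟩ := isCompact_univ.exists_isMinOn Set.univ_nonempty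
    hUinfcont.continuousOn
  have hbdd : BddBelow (Set.range Uinf) := by
    refine ⟨Uinf z, fun a ha => ?_⟩
    obtain ⟨y, rfl⟩ := ha
    exact hz (Set.mem_univ y)
  have hmle : ∀ y, m ≤ Uinf y := fun y => csInf_le hbdd ⟨y, rfl⟩
  -- δ
  have hcpt : IsCompact (tsupport φ) := (isClosed_tsupport φ).isCompact
  obtain ⟨x₀, hx₀mem, hx₀⟩ := hcpt.exists_isMinOn hne hUinfcont.continuousOn
  set δ := Uinf x₀ - m with hδ
  have hδpos : 0 < δ := sub_pos.mpr (hsupp x₀ hx₀mem)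
  have hUinf_supp : ∀ x ∈ tsupport φ, m + δ ≤ Uinf x := by
    intro x hx
    have := (isMinOn_iff.mp hx₀) x hx
    simp only [hδ]; linarith [this]
  -- point near the infimum
  obtain ⟨a, ⟨xs, rfl⟩, hxs⟩ := Real.lt_sInf_add_pos (Set.range_nonempty Uinf)
    (show (0:ℝ) < δ/8 by linarith)
  -- bound on φ
  obtain ⟨Cφ, hCφ⟩ := isCompact_univ.exists_bound_of_continuousOn hφ.continuousOn
  have hCφ0 : 0 ≤ Cφ := le_trans (norm_nonneg _) (hCφ hM.some (Set.mem_univ _))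
  -- Z n : positivity etc
  have hZint : ∀ n, Integrable (fun y => Real.exp (-(b n) * U n y)) μ :=
    fun n => ((Real.continuous_exp.comp ((continuous_const.mul (hUcont n)))).integrable_of_hasCompactSupport
      (HasCompactSupport.of_compactSpace _))
  -- main eventual bound on g n over the support
  set θ : ℝ := 3 * δ / 8 with hθ
  have hθpos : 0 < θ := by rw [hθ]; linarith
  have hkey : ∀ᶠ n in atTop, ∀ x ∈ tsupport φ,
      g n x ≤ c⁻¹ * Real.exp (b n ^ k - b n * θ) := by
    have hconv := Metric.tendstoUniformly_iff.mp hUconv (δ/8) (by linarith)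
    have hb1 : ∀ᶠ n in atTop, max (1/r₀) (8*((L:ℝ)+1)/δ) ≤ b n := hb.eventually_ge_atTop _
    filter_upwards [hconv, hb1] with n hnU hnB x hx
    have hbn := hbpos n
    set r : ℝ := (b n)⁻¹ with hr
    have hr0 : 0 < r := inv_pos.mpr hbn
    have hrr₀ : r ≤ r₀ := by
      have h1 : 1/r₀ ≤ b n := le_trans (le_max_left _ _) hnB
      have h2 : r₀⁻¹ ≤ b n := by simpa [one_div] using h1
      calc r = (b n)⁻¹ := hr
        _ ≤ (r₀⁻¹)⁻¹ := inv_anti₀ (inv_pos.mpr hr₀) h2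
        _ = r₀ := inv_inv r₀
    have hLr : (L:ℝ) * r ≤ δ/8 := by
      have h2 : 8*((L:ℝ)+1)/δ ≤ b n := le_trans (le_max_right _ _) hnB
      have h3 : 8*((L:ℝ)+1) ≤ b n * δ := (div_le_iff₀ hδpos).mp h2
      rw [hr]
      rw [mul_inv_le_iff₀ hbn]
      nlinarith
    have hclose : ∀ y, |Uinf y - U n y| < δ/8 := fun y => by
      have := hnU y; rwa [Real.dist_eq] at this
    -- U n on a small ball around xs
    have hUball : ∀ y ∈ Metric.ball xs r, U n y ≤ m + δ/2 := by
      intro y hy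
      have h1 := abs_le.mp (hUlip n y xs)
      have h2 := abs_lt.mp (hclose xs)
      have h3 : dist y xs < r := Metric.mem_ball.mp hy
      have h4 : (L:ℝ) * dist y xs ≤ (L:ℝ) * r :=
        mul_le_mul_of_nonneg_left h3.le L.2
      have hxs' : Uinf xs < m + δ/8 := hxs
      linarith [h1.1, h1.2, h2.1, h2.2]
    -- lower bound on the partition function
    have hμB : c * Real.exp (-(r ^ (-k))) ≤ (μ (Metric.ball xs r)).toReal := by
      rw [← ENNReal.ofReal_le_iff_le_toReal (measure_ne_top μ _)]
      exact hball xs r hr0 hrr₀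
    have hrk : r ^ (-k) = (b n) ^ k := by
      rw [hr, Real.inv_rpow (hbpos n).le, Real.rpow_neg (hbpos n).le, inv_inv]
    have hZlb : (c * Real.exp (-((b n) ^ k))) * Real.exp (-(b n) * (m + δ/2))
        ≤ ∫ y, Real.exp (-(b n) * U n y) ∂μ := by
      calc (c * Real.exp (-((b n) ^ k))) * Real.exp (-(b n) * (m + δ/2))
          ≤ Real.exp (-(b n) * (m + δ/2)) * (μ (Metric.ball xs r)).toReal := by
            rw [mul_comm]
            refine mul_le_mul_of_nonneg_left ?_ (Real.exp_pos _).le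
            rw [← hrk]; exact hμB
        _ ≤ ∫ y in Metric.ball xs r, Real.exp (-(b n) * U n y) ∂μ := by
            refine setIntegral_ge_of_const_le_real measurableSet_ball (measure_ne_top μ _)
              (fun y hy => Real.exp_le_exp.mpr ?_) (hZint n).integrableOn
            have := hUball y hy
            nlinarith
        _ ≤ ∫ y, Real.exp (-(b n) * U n y) ∂μ :=
            setIntegral_le_integral (hZint n) (ae_of_all _ fun y => (Real.exp_pos _).le)
    have hZlbpos : 0 < (c * Real.exp (-((b n) ^ k))) * Real.exp (-(b n) * (m + δ/2)) := by
      positivity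
    have hZpos : 0 < ∫ y, Real.exp (-(b n) * U n y) ∂μ := lt_of_lt_of_le hZlbpos hZlb
    -- on the support U n is large
    have hUsupp : m + 7*δ/8 ≤ U n x := by
      have h1 := abs_lt.mp (hclose x)
      have h2 := hUinf_supp x hx
      linarith [h1.1, h1.2]
    rw [honsager n x]
    have h1 : Real.exp (-(b n) * U n x) ≤ Real.exp (-(b n) * (m + 7*δ/8)) :=
      Real.exp_le_exp.mpr (by nlinarith)
    have h2 : (∫ y, Real.exp (-(b n) * U n y) ∂μ)⁻¹
        ≤ ((c * Real.exp (-((b n) ^ k))) * Real.exp (-(b n) * (m + δ/2)))⁻¹ :=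
      inv_anti₀ hZlbpos hZlb
    calc (∫ y, Real.exp (-(b n) * U n y) ∂μ)⁻¹ * Real.exp (-(b n) * U n x)
        ≤ ((c * Real.exp (-((b n) ^ k))) * Real.exp (-(b n) * (m + δ/2)))⁻¹
            * Real.exp (-(b n) * (m + 7*δ/8)) := by
          exact mul_le_mul h2 h1 (Real.exp_pos _).le (by positivity)
      _ = c⁻¹ * Real.exp (b n ^ k - b n * θ) := by
          rw [mul_inv, mul_inv, ← Real.exp_neg, ← Real.exp_neg, mul_assoc, mul_assoc,
            ← Real.exp_add, ← Real.exp_add]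
          congr 1
          generalize b n ^ k = t
          rw [hθ]; ring
  -- the bounding sequence tends to 0
  have hA : Tendsto (fun n => Cφ * (c⁻¹ * Real.exp (b n ^ k - b n * θ))) atTop (nhds 0) := by
    have h2 : Tendsto (fun n => (b n) ^ (k - 1)) atTop (nhds 0) := by
      have := (tendsto_rpow_neg_atTop (by linarith : (0:ℝ) < 1 - k)).comp hb
      simpa [neg_sub, Function.comp_def] using this
    have h3 : ∀ᶠ n in atTop, b n ^ k - b n * θ ≤ -(θ/2) * b n := by
      filter_upwards [h2.eventually (eventually_le_nhds (by linarith : (0:ℝ) < θ/2)),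
        hb.eventually_ge_atTop 1] with n hn1 hn2
      have hbn := hbpos n
      have hbk : b n ^ k = b n ^ (k-1) * b n := by
        rw [← Real.rpow_add_one (ne_of_gt hbn)]; ring_nf
      rw [hbk]
      have : b n ^ (k-1) * b n ≤ (θ/2) * b n :=
        mul_le_mul_of_nonneg_right hn1 hbn.le
      nlinarith
    have h1 : Tendsto (fun n => b n ^ k - b n * θ) atTop atBot := by
      refine tendsto_atBot_mono' atTop h3 ?_
      have h5 : Tendsto (fun n => (θ/2) * b n) atTop atTop :=
        hb.const_mul_atTop (by linarith)
      have h6 : Tendsto (fun n => -(θ/2 * b n)) atTop atBot := tendsto_neg_atBot_iff.mpr h5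
      simpa [neg_mul] using h6
    have h4 : Tendsto (fun n => Real.exp (b n ^ k - b n * θ)) atTop (nhds 0) :=
      Real.tendsto_exp_atBot.comp h1
    have := h4.const_mul (Cφ * c⁻¹)
    simpa [mul_assoc] using this
  -- squeeze
  have habs : Tendsto (fun n => |∫ x, φ x * g n x ∂μ|) atTop (nhds 0) := by
    refine squeeze_zero' (Eventually.of_forall fun n => abs_nonneg _) ?_ hA
    filter_upwards [hkey] with n hn
    have hbnd : ∀ x, ‖φ x * g n x‖ ≤ Cφ * (c⁻¹ * Real.exp (b n ^ k - b n * θ)) := by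
      intro x
      by_cases hx : x ∈ tsupport φ
      · rw [norm_mul]
        refine mul_le_mul (hCφ x (Set.mem_univ x)) ?_ (norm_nonneg _) hCφ0
        rw [Real.norm_eq_abs, abs_of_nonneg (hg_nonneg n x)]
        exact hn x hx
      · rw [image_eq_zero_of_notMem_tsupport hx]
        simp only [zero_mul, norm_zero]
        positivity
    calc |∫ x, φ x * g n x ∂μ|
        ≤ Cφ * (c⁻¹ * Real.exp (b n ^ k - b n * θ)) * (μ Set.univ).toReal := by
          simpa [Real.norm_eq_abs] using
            norm_integral_le_of_norm_le_const (μ := μ) (ae_of_all _ hbnd)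
      _ = Cφ * (c⁻¹ * Real.exp (b n ^ k - b n * θ)) := by simp
  exact (tendsto_zero_iff_abs_tendsto_zero _).mpr habs
end
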